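/- Let f, g : ℤ → ℝ be finitely supported signals and ν ∈ ℤ, and suppose the pair (f, g shifted by ν) is similarly ordered: for all m, m' ∈ ℤ, (f[m] − f[m']) · (g[m + ν] − g[m' + ν]) ≥ 0. Then the cross-correlation function of f and g is maximized at ν; that is, (f ⋆ g)[n] ≤ (f ⋆ g)[ν] for all n ∈ ℤ. -/
import Mathlib

/-- If the pair `(f, g shifted by ν)` is similarly ordered, then the
cross-correlation of `f` and `g` is maximized at `ν`. -/
theorem crosscorr_max_of_similarly_ordered
    (f g : ℤ → ℝ)
    (hf : (Function.support f).Finite)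
    (hg : (Function.support g).Finite)
    (ν : ℤ)
    (hord : ∀ m m' : ℤ, (f m - f m') * (g (m + ν) - g (m' + ν)) ≥ 0) :
    ∀ n : ℤ,
      (∑ᶠ m : ℤ, f m * g (m + n)) ≤ ∑ᶠ m : ℤ, f m * g (m + ν) := by
  intro n
  classical
  set k := n - ν with hk
  set A : Finset ℤ := hf.toFinset with hA
  set B : Finset ℤ := A.image (· + k) with hB
  have hinj : Function.Injective (· + k) := fun a b h => by simpa using h
  have hcardAB : A.card = B.card := (Finset.card_image_of_injective A hinj).symm
  have hcard : (B \ A).card = (A \ B).card := by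
    have h1 := Finset.card_sdiff_add_card_inter B A
    have h2 := Finset.card_sdiff_add_card_inter A B
    rw [Finset.inter_comm] at h1
    linarith
  let e : (B \ A : Finset ℤ) ≃ (A \ B : Finset ℤ) := Finset.equivOfCardEq hcard
  have heA : ∀ x : (B \ A : Finset ℤ), (e x : ℤ) ∈ A \ B := fun x => (e x).2
  have hmemA : ∀ m : ℤ, m ∈ A ↔ f m ≠ 0 := by
    intro m; simp [hA, Set.Finite.mem_toFinset, Function.mem_support]
  -- the permutation
  let toF : ℤ → ℤ := fun m =>
    if m ∈ A then m + k else if hm : m ∈ B \ A then (e ⟨m, hm⟩ : ℤ) else m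
  let invF : ℤ → ℤ := fun m =>
    if m ∈ B then m - k else if hm : m ∈ A \ B then (e.symm ⟨m, hm⟩ : ℤ) else m
  have hleft : Function.LeftInverse invF toF := by
    intro m
    by_cases hmA : m ∈ A
    · have hB' : m + k ∈ B := Finset.mem_image_of_mem _ hmA
      simp [toF, invF, hmA, hB']
    · by_cases hmB : m ∈ B \ A
      · have h1 : (e ⟨m, hmB⟩ : ℤ) ∈ A \ B := (e ⟨m, hmB⟩).2
        have h2 : (e ⟨m, hmB⟩ : ℤ) ∉ B := (Finset.mem_sdiff.1 h1).2
        have ht : toF m = (e ⟨m, hmB⟩ : ℤ) := by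
          show (if m ∈ A then m + k else if hm : m ∈ B \ A then (e ⟨m, hm⟩ : ℤ) else m) = _
          rw [if_neg hmA, dif_pos hmB]
        show invF (toF m) = m
        rw [ht]
        show (if _ ∈ B then _ - k else if hm : _ ∈ A \ B then (e.symm ⟨_, hm⟩ : ℤ) else _) = m
        rw [if_neg h2, dif_pos h1, Subtype.coe_eta, Equiv.symm_apply_apply]
      · have hmB' : m ∉ B := fun h => hmB (Finset.mem_sdiff.2 ⟨h, hmA⟩)
        have hmAB : m ∉ A \ B := fun h => hmA (Finset.mem_sdiff.1 h).1
        simp [toF, invF, hmA, hmB, hmB', hmAB]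
  have hright : Function.RightInverse invF toF := by
    intro m
    by_cases hmB : m ∈ B
    · have hmkA : m - k ∈ A := by
        rcases Finset.mem_image.1 hmB with ⟨a, haA, ha⟩
        simpa [← ha] using haA
      simp [toF, invF, hmB, hmkA]
    · by_cases hmAB : m ∈ A \ B
      · have h1 : (e.symm ⟨m, hmAB⟩ : ℤ) ∈ B \ A := (e.symm ⟨m, hmAB⟩).2
        have h2 : (e.symm ⟨m, hmAB⟩ : ℤ) ∉ A := (Finset.mem_sdiff.1 h1).2
        have ht : invF m = (e.symm ⟨m, hmAB⟩ : ℤ) := by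
          show (if m ∈ B then m - k else if hm : m ∈ A \ B then (e.symm ⟨m, hm⟩ : ℤ) else m) = _
          rw [if_neg hmB, dif_pos hmAB]
        show toF (invF m) = m
        rw [ht]
        show (if _ ∈ A then _ + k else if hm : _ ∈ B \ A then (e ⟨_, hm⟩ : ℤ) else _) = m
        rw [if_neg h2, dif_pos h1, Subtype.coe_eta, Equiv.apply_symm_apply]
      · have hmA : m ∉ A := fun h => hmAB (Finset.mem_sdiff.2 ⟨h, hmB⟩)
        have hmBA : m ∉ B \ A := fun h => hmB (Finset.mem_sdiff.1 h).1
        simp [toF, invF, hmB, hmAB, hmA, hmBA]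
  let σ : Equiv.Perm ℤ := ⟨toF, invF, hleft, hright⟩
  -- monovariance
  have hmono : Monovary f (fun m => g (m + ν)) := by
    intro i j hij
    by_contra hfij
    push_neg at hfij
    have h := hord i j
    nlinarith
  have hsupp : {x | σ x ≠ x} ⊆ (↑(A ∪ B) : Set ℤ) := by
    intro x hx
    simp only [Set.mem_setOf_eq] at hx
    by_contra hxAB
    simp only [Finset.coe_union, Set.mem_union, Finset.mem_coe] at hxAB
    push_neg at hxAB
    obtain ⟨hxA, hxB⟩ := hxAB
    have hxBA : x ∉ B \ A := fun h => hxB (Finset.mem_sdiff.1 h).1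
    refine hx ?_
    show toF x = x
    show (if x ∈ A then x + k else if hm : x ∈ B \ A then (e ⟨x, hm⟩ : ℤ) else x) = x
    rw [if_neg hxA, dif_neg hxBA]
  have key := (hmono.monovaryOn (↑(A ∪ B) : Set ℤ)).sum_smul_comp_perm_le_sum_smul
      (σ := σ) (by simpa using hsupp)
  simp only [smul_eq_mul] at key
  -- rewrite finsums as finite sums over A ∪ B
  have hsub : Function.support (fun m => f m * g (m + n)) ⊆ (↑(A ∪ B) : Set ℤ) := by
    intro x hx
    have : f x ≠ 0 := fun h => by simp [h] at hx
    simp [Finset.mem_union, (hmemA x).2 this]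
  have hsub' : Function.support (fun m => f m * g (m + ν)) ⊆ (↑(A ∪ B) : Set ℤ) := by
    intro x hx
    have : f x ≠ 0 := fun h => by simp [h] at hx
    simp [Finset.mem_union, (hmemA x).2 this]
  rw [finsum_eq_sum_of_support_subset _ hsub, finsum_eq_sum_of_support_subset _ hsub']
  refine le_trans (le_of_eq ?_) key
  apply Finset.sum_congr rfl
  intro i hi
  by_cases hiA : i ∈ A
  · have : σ i = i + k := by simp [σ, toF, hiA]
    rw [this, show i + k + ν = i + n from by omega]
  · have : f i = 0 := by_contra fun h => hiA ((hmemA i).2 h)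
    simp [this]
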